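/- Let k ≥ 2. If G1 and G2 are k-critical graphs, and G is a Hajós join of G1 and G2 that has maximum degree k, then G is also k-critical. -/

import Mathlib

/-- A proper edge coloring of `G` with `n` colors: edges sharing an endpoint
get distinct colors. -/
def EdgeColorable {V : Type*} (G : SimpleGraph V) (n : ℕ) : Prop :=
  ∃ C : G.edgeSet → Fin n, ∀ e₁ e₂ : G.edgeSet, e₁ ≠ e₂ →
    (∃ v, v ∈ (e₁ : Sym2 V) ∧ v ∈ (e₂ : Sym2 V)) → C e₁ ≠ C e₂

/-- The chromatic index (edge chromatic number) of `G`. -/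
noncomputable def chromIndex {V : Type*} (G : SimpleGraph V) : ℕ :=
  sInf {n | EdgeColorable G n}

/-- The degree of a vertex. -/
noncomputable def deg {V : Type*} (G : SimpleGraph V) (v : V) : ℕ :=
  (G.neighborSet v).ncard

/-- A graph with maximum degree `k` is `k`-critical if `χ'(G) = k + 1` and
`χ'(G - e) = k` for every edge `e`. -/
def IsCritical {V : Type*} (k : ℕ) (G : SimpleGraph V) : Prop :=
  (∀ v, deg G v ≤ k) ∧ (∃ v, deg G v = k) ∧
  chromIndex G = k + 1 ∧
  ∀ e ∈ G.edgeSet, chromIndex (G.deleteEdges {e}) = k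

/-- The Hajós join of `G₁` and `G₂` along edges `v₁v₂` and `v₃v₄`: delete the
two edges, identify `v₁` with `v₃`, and add the edge `v₂v₄`. -/
def hajosJoin {V₁ V₂ : Type*} (G₁ : SimpleGraph V₁) (G₂ : SimpleGraph V₂)
    (v₁ v₂ : V₁) (v₃ v₄ : V₂) :
    SimpleGraph (V₁ ⊕ {x : V₂ // x ≠ v₃}) :=
  SimpleGraph.fromRel fun a b =>
    match a, b with
    | Sum.inl x, Sum.inl y => G₁.Adj x y ∧ s(x, y) ≠ s(v₁, v₂)
    | Sum.inl x, Sum.inr y => (x = v₁ ∧ G₂.Adj v₃ y.1 ∧ y.1 ≠ v₄) ∨ (x = v₂ ∧ y.1 = v₄)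
    | Sum.inr _, Sum.inl _ => False
    | Sum.inr x, Sum.inr y => G₂.Adj x.1 y.1 ∧ s(x.1, y.1) ≠ s(v₃, v₄)

/-- `G` is a Hajós join of `G₁` and `G₂`. -/
def IsHajosJoin {W V₁ V₂ : Type*} (G : SimpleGraph W)
    (G₁ : SimpleGraph V₁) (G₂ : SimpleGraph V₂) : Prop :=
  ∃ (v₁ v₂ : V₁) (v₃ v₄ : V₂), G₁.Adj v₁ v₂ ∧ G₂.Adj v₃ v₄ ∧
    Nonempty (G ≃g hajosJoin G₁ G₂ v₁ v₂ v₃ v₄)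

/-- Vertices of the Petersen graph: 2-element subsets of a 5-element set. -/
abbrev KVert : Type := {s : Finset (Fin 5) // s.card = 2}

/-- The Petersen graph, as the Kneser graph K(5,2). -/
def Petersen : SimpleGraph KVert where
  Adj a b := Disjoint a.1 b.1
  symm := ⟨fun a b h => h.symm⟩
  loopless := ⟨fun (a : KVert) h => by
    have h2 := a.2
    have h' : (a.1 : Finset (Fin 5)) = ∅ := disjoint_self.mp h
    rw [h'] at h2
    simp at h2⟩

/-- A fixed vertex of the Petersen graph. -/
def pstarV : KVert := ⟨{0, 1}, by decide⟩

/-- The vertex set of the Petersen graph minus one vertex. -/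
abbrev PV : Type := {x : KVert // x ≠ pstarV}

/-- `P*`: the Petersen graph with one vertex deleted. -/
def PStar : SimpleGraph PV where
  Adj a b := Petersen.Adj a.1 b.1
  symm := ⟨fun a b h => Petersen.adj_symm h⟩
  loopless := ⟨fun a h => Petersen.irrefl h⟩

set_option linter.unusedSectionVars false
set_option maxHeartbeats 1000000

section Generic
variable {V V' : Type*} {G : SimpleGraph V} {G' : SimpleGraph V'} {n m k : ℕ}

/-- total-function version of proper colorings -/
def PC {V : Type*} (G : SimpleGraph V) (n : ℕ) (c : Sym2 V → Fin n) : Prop :=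
  ∀ p ∈ G.edgeSet, ∀ q ∈ G.edgeSet, p ≠ q → (∃ w, w ∈ p ∧ w ∈ q) → c p ≠ c q

theorem edgeColorable_of_pc (c : Sym2 V → Fin n) (h : PC G n c) : EdgeColorable G n := by
  refine ⟨fun e => c e.1, fun e₁ e₂ hne hsh => ?_⟩
  exact h e₁.1 e₁.2 e₂.1 e₂.2 (by simpa [Subtype.ext_iff] using hne) hsh

theorem pc_of_edgeColorable (hn : 0 < n) (h : EdgeColorable G n) :
    ∃ c : Sym2 V → Fin n, PC G n c := by
  obtain ⟨C, hC⟩ := h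
  classical
  refine ⟨fun p => if hp : p ∈ G.edgeSet then C ⟨p, hp⟩ else ⟨0, hn⟩, ?_⟩
  intro p hp q hq hne hsh
  simpa [dif_pos hp, dif_pos hq] using
    hC ⟨p, hp⟩ ⟨q, hq⟩ (by simpa [Subtype.ext_iff] using hne) hsh

theorem edgeColorable_mono (h : EdgeColorable G n) (hnm : n ≤ m) : EdgeColorable G m := by
  obtain ⟨C, hC⟩ := h
  exact ⟨fun e => Fin.castLE hnm (C e), fun e₁ e₂ hne hsh hc =>
    hC e₁ e₂ hne hsh (Fin.castLE_injective hnm hc)⟩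

theorem exists_edgeColorable [Finite V] (G : SimpleGraph V) : ∃ n, EdgeColorable G n := by
  have : Finite G.edgeSet := Set.Finite.to_subtype (G.edgeSet.toFinite)
  obtain ⟨n, ⟨e⟩⟩ := Finite.exists_equiv_fin G.edgeSet
  exact ⟨n, e, fun e₁ e₂ hne _ hc => hne (e.injective hc)⟩

theorem edgeColorable_chromIndex [Finite V] (G : SimpleGraph V) :
    EdgeColorable G (chromIndex G) :=
  Nat.sInf_mem (exists_edgeColorable G)

theorem chromIndex_le (h : EdgeColorable G n) : chromIndex G ≤ n := Nat.sInf_le h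

theorem not_edgeColorable_of_chromIndex_eq [Finite V] (h : chromIndex G = m)
    (hlt : n < m) : ¬ EdgeColorable G n := by
  intro hc
  have := chromIndex_le hc
  omega

theorem chromIndex_eq [Finite V] (h1 : EdgeColorable G m) (h2 : ¬ EdgeColorable G (m - 1))
    (hm : 0 < m) : chromIndex G = m := by
  refine le_antisymm (chromIndex_le h1) ?_
  by_contra hlt
  push_neg at hlt
  exact h2 (edgeColorable_mono (edgeColorable_chromIndex G) (by omega))

theorem edgeColorable_succ_of_delete {e : Sym2 V} (he : e ∈ G.edgeSet)
    (h : EdgeColorable (G.deleteEdges {e}) n) : EdgeColorable G (n + 1) := by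
  obtain ⟨C, hC⟩ := h
  classical
  have hmem : ∀ d : G.edgeSet, d.1 ≠ e → d.1 ∈ (G.deleteEdges {e}).edgeSet := by
    intro d hd
    rw [SimpleGraph.edgeSet_deleteEdges]
    exact ⟨d.2, hd⟩
  refine ⟨fun d => if hd : d.1 = e then Fin.last n else
    Fin.castSucc (C ⟨d.1, hmem d hd⟩), fun d₁ d₂ hne hsh => ?_⟩
  by_cases h1 : d₁.1 = e <;> by_cases h2 : d₂.1 = e
  · exact absurd (Subtype.ext (h1.trans h2.symm)) hne
  · simp only [dif_pos h1, dif_neg h2]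
    exact fun hc => absurd hc.symm (Fin.ne_last_of_lt (Fin.castSucc_lt_last _))
  · simp only [dif_neg h1, dif_pos h2]
    exact Fin.ne_last_of_lt (Fin.castSucc_lt_last _)
  · simp only [dif_neg h1, dif_neg h2]
    intro hc
    exact hC ⟨d₁.1, hmem d₁ h1⟩ ⟨d₂.1, hmem d₂ h2⟩
      (by simpa [Subtype.ext_iff] using hne) hsh (Fin.castSucc_injective _ hc)

theorem edgeColorable_of_iso (f : G ≃g G') (h : EdgeColorable G' n) : EdgeColorable G n := by
  obtain ⟨C, hC⟩ := h
  refine ⟨fun e => C (f.mapEdgeSet e), fun e₁ e₂ hne hsh => ?_⟩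
  refine hC _ _ (fun hc => hne ((f.mapEdgeSet).injective hc)) ?_
  obtain ⟨w, hw1, hw2⟩ := hsh
  exact ⟨f w, Sym2.mem_map.2 ⟨w, hw1, rfl⟩, Sym2.mem_map.2 ⟨w, hw2, rfl⟩⟩

/-- isomorphism between deletions -/
def isoDeleteEdges (f : G ≃g G') (e : Sym2 V) :
    G.deleteEdges {e} ≃g G'.deleteEdges {Sym2.map f e} where
  toEquiv := f.toEquiv
  map_rel_iff' := by
    intro a b
    simp only [SimpleGraph.deleteEdges_adj, Set.mem_singleton_iff]
    constructor
    · rintro ⟨hadj, hne⟩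
      refine ⟨f.map_rel_iff.1 hadj, fun hc => hne ?_⟩
      rw [← hc, Sym2.map_pair_eq]
      rfl
    · rintro ⟨hadj, hne⟩
      refine ⟨f.map_rel_iff.2 hadj, fun hc => ?_⟩
      have : Sym2.map f s(a, b) = Sym2.map f e := by
        rw [Sym2.map_pair_eq]; exact hc
      exact hne (Sym2.map.injective f.injective this)

end Generic

theorem exists_perm_avoid {k : ℕ} (S T : Set (Fin k)) (h : S.ncard + T.ncard ≤ k) :
    ∃ π : Equiv.Perm (Fin k), ∀ s ∈ S, π s ∉ T := by
  classical
  set S' : Finset (Fin k) := S.toFinset with hS'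
  set T' : Finset (Fin k) := T.toFinset with hT'
  have hcard : S'.card ≤ T'ᶜ.card := by
    rw [Finset.card_compl]
    have h1 : S'.card = S.ncard := by simp [hS', Set.ncard_eq_toFinset_card']
    have h2 : T'.card = T.ncard := by simp [hT', Set.ncard_eq_toFinset_card']
    have := Fintype.card_fin k
    omega
  obtain ⟨U, hUsub, hUcard⟩ := Finset.exists_subset_card_eq hcard
  have e₁ : {x // x ∈ S'} ≃ {x // x ∈ U} := Finset.equivOfCardEq hUcard.symm
  have hcompl : S'ᶜ.card = Uᶜ.card := by
    rw [Finset.card_compl, Finset.card_compl, hUcard]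
  have e₂ : {x // x ∈ S'ᶜ} ≃ {x // x ∈ Uᶜ} := Finset.equivOfCardEq hcompl
  have e₂' : {x // ¬ x ∈ S'} ≃ {x // ¬ x ∈ U} :=
    ((Equiv.subtypeEquivRight (fun x => (Finset.mem_compl).symm)).trans e₂).trans
      (Equiv.subtypeEquivRight (fun x => Finset.mem_compl))
  refine ⟨((Equiv.sumCompl (· ∈ S')).symm.trans
    ((e₁.sumCongr e₂').trans (Equiv.sumCompl (· ∈ U)))), ?_⟩
  intro s hs
  have hsS' : s ∈ S' := by simpa [hS'] using hs
  have : (Equiv.sumCompl (· ∈ S')).symm s = Sum.inl ⟨s, hsS'⟩ :=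
    Equiv.sumCompl_symm_apply_of_pos hsS'
  simp only [Equiv.trans_apply, this, Equiv.sumCongr_apply, Sum.map_inl,
    Equiv.sumCompl_apply_inl]
  have hmem : (e₁ ⟨s, hsS'⟩ : Fin k) ∈ U := (e₁ ⟨s, hsS'⟩).2
  have : (e₁ ⟨s, hsS'⟩ : Fin k) ∉ T' := fun hc =>
    (Finset.mem_compl.1 (hUsub hmem)) hc
  simpa [hT'] using this

theorem exists_perm_avoid_pin {k : ℕ} (S T : Set (Fin k)) {y α : Fin k}
    (hy : y ∈ S) (hα : α ∉ T) (h : S.ncard + T.ncard ≤ k) :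
    ∃ π : Equiv.Perm (Fin k), (∀ s ∈ S, π s ∉ T) ∧ π y = α := by
  obtain ⟨π₀, hπ₀⟩ := exists_perm_avoid S T h
  refine ⟨π₀.trans (Equiv.swap (π₀ y) α), fun s hs => ?_, ?_⟩
  · simp only [Equiv.trans_apply]
    rcases eq_or_ne (π₀ s) (π₀ y) with h1 | h1
    · rw [h1, Equiv.swap_apply_left]; exact hα
    · rcases eq_or_ne (π₀ s) α with h2 | h2
      · rw [h2, Equiv.swap_apply_right]; exact hπ₀ y hy
      · rw [Equiv.swap_apply_of_ne_of_ne h1 h2]; exact hπ₀ s hs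
  · simp [Equiv.swap_apply_left]

/-- if `G` is not `k`-colorable but `G - ab` is properly colored by `c`, then no color is
free at both `a` and `b`. -/
theorem no_common_free {V : Type*} {G : SimpleGraph V} {k : ℕ} {a b : V}
    (hG : ¬ EdgeColorable G k) (hab : G.Adj a b) {c : Sym2 V → Fin k}
    (hc : PC (G.deleteEdges {s(a, b)}) k c) (γ : Fin k)
    (hb' : ∀ q ∈ G.edgeSet, q ≠ s(a, b) → b ∈ q → c q ≠ γ) :
    ∃ q ∈ G.edgeSet, q ≠ s(a, b) ∧ a ∈ q ∧ c q = γ := by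
  by_contra hcon
  push_neg at hcon
  apply hG
  classical
  refine edgeColorable_of_pc (Function.update c s(a, b) γ) ?_
  intro p hp q hq hne hsh
  rcases eq_or_ne p s(a, b) with hps | hps <;> rcases eq_or_ne q s(a, b) with hqs | hqs
  · exact absurd (hps.trans hqs.symm) hne
  · subst hps
    rw [Function.update_self, Function.update_of_ne hqs]
    obtain ⟨w, hw1, hw2⟩ := hsh
    rw [Sym2.mem_iff] at hw1
    rcases hw1 with rfl | rfl
    · exact fun hcc => hcon q hq hqs hw2 hcc.symm
    · exact fun hcc => (hb' q hq hqs hw2) hcc.symm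
  · subst hqs
    rw [Function.update_self, Function.update_of_ne hps]
    obtain ⟨w, hw1, hw2⟩ := hsh
    rw [Sym2.mem_iff] at hw2
    rcases hw2 with rfl | rfl
    · exact fun hcc => hcon p hp hps hw1 hcc
    · exact hb' p hp hps hw1
  · rw [Function.update_of_ne hps, Function.update_of_ne hqs]
    refine hc p ?_ q ?_ hne hsh <;> rw [SimpleGraph.edgeSet_deleteEdges]
    · exact ⟨hp, hps⟩
    · exact ⟨hq, hqs⟩

theorem deg_map {V W : Type*} {G : SimpleGraph V} {G' : SimpleGraph W} (f : G ≃g G')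
    (v : V) : deg G v = deg G' (f v) := by
  rw [deg, deg, ← Nat.card_coe_set_eq, ← Nat.card_coe_set_eq]
  exact Nat.card_congr (Equiv.subtypeEquiv f.toEquiv (fun a => by
    simp only [SimpleGraph.mem_neighborSet]
    exact f.map_adj_iff.symm))

theorem exists_not_mem_of_ncard_lt {k : ℕ} (S : Set (Fin k)) (h : S.ncard < k) :
    ∃ δ, δ ∉ S := by
  by_contra hcon
  push_neg at hcon
  have : S = Set.univ := Set.eq_univ_iff_forall.2 hcon
  rw [this, Set.ncard_univ, Nat.card_eq_fintype_card, Fintype.card_fin] at h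
  omega

theorem ncard_incidenceSet {V : Type*} [Finite V] (G : SimpleGraph V) (v : V) :
    (G.incidenceSet v).ncard = deg G v := by
  classical
  cases nonempty_fintype V
  rw [deg, ← Nat.card_coe_set_eq, ← Nat.card_coe_set_eq]
  exact Nat.card_congr (G.incidenceSetEquivNeighborSet v)

theorem mem_incidenceSet' {V : Type*} {G : SimpleGraph V} {v : V} {e : Sym2 V} :
    e ∈ G.incidenceSet v ↔ e ∈ G.edgeSet ∧ v ∈ e := Iff.rfl

namespace HJ

variable {V₁ V₂ : Type*} (G₁ : SimpleGraph V₁) (G₂ : SimpleGraph V₂)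
  (v₁ v₂ : V₁) (v₃ v₄ : V₂)

/-- the embedding of `V₂` into the Hajós join vertex type -/
def emb [DecidableEq V₂] (v₁ : V₁) (v₃ : V₂) : V₂ → V₁ ⊕ {x : V₂ // x ≠ v₃} :=
  fun z => if h : z = v₃ then Sum.inl v₁ else Sum.inr ⟨z, h⟩

variable [DecidableEq V₂]

theorem emb_v₃ : emb (V₁ := V₁) v₁ v₃ v₃ = Sum.inl v₁ := by simp [emb]

theorem emb_ne {z : V₂} (h : z ≠ v₃) : emb (V₁ := V₁) v₁ v₃ z = Sum.inr ⟨z, h⟩ := by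
  simp [emb, h]

theorem emb_eq_inl_iff {z : V₂} {w : V₁} :
    emb (V₁ := V₁) v₁ v₃ z = Sum.inl w ↔ z = v₃ ∧ w = v₁ := by
  by_cases h : z = v₃ <;> simp [emb, h, eq_comm]

theorem emb_eq_inr_iff {z : V₂} {y : {x : V₂ // x ≠ v₃}} :
    emb (V₁ := V₁) v₁ v₃ z = Sum.inr y ↔ z = y.1 := by
  by_cases h : z = v₃
  · subst h
    simp only [emb_v₃]
    constructor
    · intro hc; exact absurd hc (by simp)
    · intro hc; exact absurd hc.symm y.2
  · simp [emb, h, Subtype.ext_iff]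

theorem emb_injective : Function.Injective (emb (V₁ := V₁) v₁ v₃) := by
  intro a b hab
  by_cases ha : a = v₃ <;> by_cases hb : b = v₃
  · rw [ha, hb]
  · subst ha; rw [emb_v₃, emb_ne _ _ hb] at hab; exact absurd hab (by simp)
  · subst hb; rw [emb_v₃, emb_ne _ _ ha] at hab; exact absurd hab (by simp)
  · rw [emb_ne _ _ ha, emb_ne _ _ hb] at hab
    simpa [Subtype.ext_iff] using hab

section Adj

theorem adj_inl_inl {x y : V₁} :
    (hajosJoin G₁ G₂ v₁ v₂ v₃ v₄).Adj (Sum.inl x) (Sum.inl y) ↔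
      G₁.Adj x y ∧ s(x, y) ≠ s(v₁, v₂) := by
  rw [hajosJoin, SimpleGraph.fromRel_adj]
  constructor
  · rintro ⟨hne, h | h⟩
    · exact h
    · exact ⟨(h.1 : G₁.Adj y x).symm, by rw [Sym2.eq_swap]; exact h.2⟩
  · intro h
    exact ⟨by simpa using h.1.ne, Or.inl h⟩

theorem adj_inl_inr {x : V₁} {y : {z : V₂ // z ≠ v₃}} :
    (hajosJoin G₁ G₂ v₁ v₂ v₃ v₄).Adj (Sum.inl x) (Sum.inr y) ↔
      (x = v₁ ∧ G₂.Adj v₃ y.1 ∧ y.1 ≠ v₄) ∨ (x = v₂ ∧ y.1 = v₄) := by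
  rw [hajosJoin, SimpleGraph.fromRel_adj]
  constructor
  · rintro ⟨_, h | h⟩
    · exact h
    · exact absurd h not_false
  · intro h
    exact ⟨by simp, Or.inl h⟩

theorem adj_inr_inr {x y : {z : V₂ // z ≠ v₃}} :
    (hajosJoin G₁ G₂ v₁ v₂ v₃ v₄).Adj (Sum.inr x) (Sum.inr y) ↔
      G₂.Adj x.1 y.1 ∧ s(x.1, y.1) ≠ s(v₃, v₄) := by
  rw [hajosJoin, SimpleGraph.fromRel_adj]
  constructor
  · rintro ⟨hne, h | h⟩
    · exact h
    · exact ⟨(h.1 : G₂.Adj y.1 x.1).symm, by rw [Sym2.eq_swap]; exact h.2⟩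
  · intro h
    refine ⟨?_, Or.inl h⟩
    simp only [ne_eq, Sum.inr.injEq]
    intro hc
    exact h.1.ne (by rw [hc])

end Adj

section Edges

open Sym2

variable {G₁ G₂ v₁ v₂ v₃ v₄}

/-- the special edge -/
def sp (v₂ : V₁) {v₃ v₄ : V₂} (h : v₄ ≠ v₃) : Sym2 (V₁ ⊕ {x : V₂ // x ≠ v₃}) :=
  s(Sum.inl v₂, Sum.inr ⟨v₄, h⟩)

variable (hadj₁ : G₁.Adj v₁ v₂) (hadj₂ : G₂.Adj v₃ v₄)

theorem mem_E1 {p : Sym2 V₁} (hp : p ∈ G₁.edgeSet) (hpne : p ≠ s(v₁, v₂)) :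
    Sym2.map Sum.inl p ∈ (hajosJoin G₁ G₂ v₁ v₂ v₃ v₄).edgeSet := by
  induction p with
  | _ x y =>
    rw [Sym2.map_pair_eq, SimpleGraph.mem_edgeSet, adj_inl_inl]
    exact ⟨hp, hpne⟩

theorem star_mem {b : V₂} (hb : b ≠ v₃) (hadj : G₂.Adj v₃ b) (hb4 : b ≠ v₄) :
    Sym2.map (emb v₁ v₃) s(v₃, b) ∈ (hajosJoin G₁ G₂ v₁ v₂ v₃ v₄).edgeSet := by
  rw [Sym2.map_pair_eq, emb_v₃, emb_ne _ _ hb, SimpleGraph.mem_edgeSet, adj_inl_inr]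
  exact Or.inl ⟨rfl, hadj, hb4⟩

theorem mem_E2 {q : Sym2 V₂} (hq : q ∈ G₂.edgeSet) (hqne : q ≠ s(v₃, v₄)) :
    Sym2.map (emb v₁ v₃) q ∈ (hajosJoin G₁ G₂ v₁ v₂ v₃ v₄).edgeSet := by
  induction q with
  | _ a b =>
    rw [SimpleGraph.mem_edgeSet] at hq
    by_cases ha : a = v₃ <;> by_cases hb : b = v₃
    · exact absurd (ha.trans hb.symm) hq.ne
    · have hbv4 : b ≠ v₄ := fun hc => hqne (by rw [ha, hc])
      rw [ha]
      exact star_mem hb (ha ▸ hq) hbv4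
    · have hav4 : a ≠ v₄ := fun hc => hqne (by rw [hb, hc, Sym2.eq_swap])
      rw [hb, Sym2.eq_swap]
      exact star_mem ha (hb ▸ hq.symm) hav4
    · rw [Sym2.map_pair_eq, emb_ne _ _ ha, emb_ne _ _ hb, SimpleGraph.mem_edgeSet,
        adj_inr_inr]
      refine ⟨hq, fun hc => ?_⟩
      rw [Sym2.eq_iff] at hc
      rcases hc with ⟨h1, h2⟩ | ⟨h1, h2⟩
      · exact ha (show a = v₃ from h1)
      · exact hqne (by rw [show a = v₄ from h1, show b = v₃ from h2, Sym2.eq_swap])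

theorem mem_E3 : sp v₂ hadj₂.ne' ∈ (hajosJoin G₁ G₂ v₁ v₂ v₃ v₄).edgeSet := by
  rw [sp, SimpleGraph.mem_edgeSet, adj_inl_inr]
  exact Or.inr ⟨rfl, rfl⟩

/-- every edge of the Hajós join is of one of three kinds -/
theorem edge_cases {d : Sym2 (V₁ ⊕ {x : V₂ // x ≠ v₃})}
    (hd : d ∈ (hajosJoin G₁ G₂ v₁ v₂ v₃ v₄).edgeSet) :
    (∃ p, p ∈ G₁.edgeSet ∧ p ≠ s(v₁, v₂) ∧ d = Sym2.map Sum.inl p) ∨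
    (∃ q, q ∈ G₂.edgeSet ∧ q ≠ s(v₃, v₄) ∧ d = Sym2.map (emb v₁ v₃) q) ∨
    d = sp v₂ hadj₂.ne' := by
  induction d with
  | _ a b =>
    rw [SimpleGraph.mem_edgeSet] at hd
    match a, b with
    | Sum.inl x, Sum.inl y =>
      rw [adj_inl_inl] at hd
      exact Or.inl ⟨s(x, y), hd.1, hd.2, by rw [Sym2.map_pair_eq]⟩
    | Sum.inl x, Sum.inr y =>
      rw [adj_inl_inr] at hd
      rcases hd with ⟨hx, hadj, hne4⟩ | ⟨hx, hy⟩
      · subst hx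
        refine Or.inr (Or.inl ⟨s(v₃, y.1), hadj, ?_, ?_⟩)
        · intro hc
          rw [Sym2.eq_iff] at hc
          rcases hc with ⟨_, h2⟩ | ⟨h1, _⟩
          · exact hne4 h2
          · exact hadj₂.ne h1
        · rw [Sym2.map_pair_eq, emb_v₃, emb_ne _ _ y.2]
      · subst hx
        refine Or.inr (Or.inr ?_)
        rw [sp, show y = (⟨v₄, hadj₂.ne'⟩ : {x : V₂ // x ≠ v₃}) from Subtype.ext hy]
    | Sum.inr y, Sum.inl x =>
      have hd' := hd.symm
      rw [adj_inl_inr] at hd'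
      rcases hd' with ⟨hx, hadj, hne4⟩ | ⟨hx, hy⟩
      · subst hx
        refine Or.inr (Or.inl ⟨s(v₃, y.1), hadj, ?_, ?_⟩)
        · intro hc
          rw [Sym2.eq_iff] at hc
          rcases hc with ⟨_, h2⟩ | ⟨h1, _⟩
          · exact hne4 h2
          · exact hadj₂.ne h1
        · rw [Sym2.map_pair_eq, emb_v₃, emb_ne _ _ y.2, Sym2.eq_swap]
      · subst hx
        refine Or.inr (Or.inr ?_)
        rw [sp, show y = (⟨v₄, hadj₂.ne'⟩ : {x : V₂ // x ≠ v₃}) from Subtype.ext hy,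
          Sym2.eq_swap]
    | Sum.inr x, Sum.inr y =>
      rw [adj_inr_inr] at hd
      refine Or.inr (Or.inl ⟨s(x.1, y.1), hd.1, hd.2, ?_⟩)
      rw [Sym2.map_pair_eq, emb_ne _ _ x.2, emb_ne _ _ y.2]

end Edges

section Distinct

variable {G₁ G₂ v₁ v₂ v₃ v₄}
variable (hadj₁ : G₁.Adj v₁ v₂) (hadj₂ : G₂.Adj v₃ v₄)

theorem map_inl_ne_map_emb {p : Sym2 V₁} (hp : p ∈ G₁.edgeSet) (q : Sym2 V₂) :
    Sym2.map Sum.inl p ≠ Sym2.map (emb (V₁ := V₁) v₁ v₃) q := by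
  induction p with
  | _ x y =>
    intro hc
    rw [SimpleGraph.mem_edgeSet] at hp
    rw [Sym2.map_pair_eq] at hc
    have hx : Sum.inl x ∈ Sym2.map (emb (V₁ := V₁) v₁ v₃) q := by
      rw [← hc]; simp
    have hy : Sum.inl y ∈ Sym2.map (emb (V₁ := V₁) v₁ v₃) q := by
      rw [← hc]; simp
    rw [Sym2.mem_map] at hx hy
    obtain ⟨a, _, ha⟩ := hx
    obtain ⟨b, _, hb⟩ := hy
    rw [emb_eq_inl_iff] at ha hb
    exact hp.ne (ha.2.trans hb.2.symm)

theorem map_inl_ne_sp (p : Sym2 V₁) : Sym2.map Sum.inl p ≠ sp v₂ hadj₂.ne' := by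
  intro hc
  have : Sum.inr (⟨v₄, hadj₂.ne'⟩ : {x : V₂ // x ≠ v₃}) ∈ Sym2.map Sum.inl p := by
    rw [hc, sp]; simp
  rw [Sym2.mem_map] at this
  obtain ⟨a, _, ha⟩ := this
  exact absurd ha (by simp)

theorem map_emb_ne_sp (h12 : v₁ ≠ v₂) (q : Sym2 V₂) :
    Sym2.map (emb (V₁ := V₁) v₁ v₃) q ≠ sp v₂ hadj₂.ne' := by
  intro hc
  have : Sum.inl v₂ ∈ Sym2.map (emb (V₁ := V₁) v₁ v₃) q := by
    rw [hc, sp]; simp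
  rw [Sym2.mem_map] at this
  obtain ⟨a, _, ha⟩ := this
  rw [emb_eq_inl_iff] at ha
  exact h12 ha.2.symm

theorem shared_inl_inl {p q : Sym2 V₁} {w : V₁ ⊕ {x : V₂ // x ≠ v₃}}
    (hw1 : w ∈ Sym2.map Sum.inl p) (hw2 : w ∈ Sym2.map Sum.inl q) :
    ∃ u, u ∈ p ∧ u ∈ q := by
  rw [Sym2.mem_map] at hw1 hw2
  obtain ⟨a, ha, ha'⟩ := hw1
  obtain ⟨b, hb, hb'⟩ := hw2
  exact ⟨a, ha, by rwa [Sum.inl_injective (ha'.trans hb'.symm)]⟩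

theorem shared_emb_emb {p q : Sym2 V₂} {w : V₁ ⊕ {x : V₂ // x ≠ v₃}}
    (hw1 : w ∈ Sym2.map (emb (V₁ := V₁) v₁ v₃) p)
    (hw2 : w ∈ Sym2.map (emb (V₁ := V₁) v₁ v₃) q) :
    ∃ u, u ∈ p ∧ u ∈ q := by
  rw [Sym2.mem_map] at hw1 hw2
  obtain ⟨a, ha, ha'⟩ := hw1
  obtain ⟨b, hb, hb'⟩ := hw2
  exact ⟨a, ha, by rwa [emb_injective v₁ v₃ (ha'.trans hb'.symm)]⟩

theorem shared_inl_emb {p : Sym2 V₁} {q : Sym2 V₂} {w : V₁ ⊕ {x : V₂ // x ≠ v₃}}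
    (hw1 : w ∈ Sym2.map Sum.inl p) (hw2 : w ∈ Sym2.map (emb (V₁ := V₁) v₁ v₃) q) :
    v₁ ∈ p ∧ v₃ ∈ q := by
  rw [Sym2.mem_map] at hw1 hw2
  obtain ⟨a, ha, ha'⟩ := hw1
  obtain ⟨b, hb, hb'⟩ := hw2
  have := hb'.trans ha'.symm
  rw [emb_eq_inl_iff] at this
  exact ⟨this.2 ▸ ha, this.1 ▸ hb⟩

theorem shared_inl_sp {p : Sym2 V₁} {w : V₁ ⊕ {x : V₂ // x ≠ v₃}}
    (hw1 : w ∈ Sym2.map Sum.inl p) (hw2 : w ∈ sp v₂ hadj₂.ne') : v₂ ∈ p := by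
  rw [Sym2.mem_map] at hw1
  obtain ⟨a, ha, ha'⟩ := hw1
  rw [sp, Sym2.mem_iff] at hw2
  rcases hw2 with h | h
  · rwa [show a = v₂ from Sum.inl_injective (ha'.trans h)] at ha
  · exact absurd (ha'.trans h) (by simp)

theorem shared_emb_sp (h12 : v₁ ≠ v₂) {q : Sym2 V₂} {w : V₁ ⊕ {x : V₂ // x ≠ v₃}}
    (hw1 : w ∈ Sym2.map (emb (V₁ := V₁) v₁ v₃) q) (hw2 : w ∈ sp v₂ hadj₂.ne') :
    v₄ ∈ q := by
  rw [Sym2.mem_map] at hw1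
  obtain ⟨a, ha, ha'⟩ := hw1
  rw [sp, Sym2.mem_iff] at hw2
  rcases hw2 with h | h
  · rw [h, emb_eq_inl_iff] at ha'
    exact absurd ha'.2.symm h12
  · rw [h, emb_eq_inr_iff] at ha'
    rwa [show a = v₄ from ha'] at ha

end Distinct

section Color

variable {n : ℕ} [DecidableEq V₁]

/-- the combined coloring, on ordered pairs -/
def hjF (c₁ : Sym2 V₁ → Fin n) (c₂ : Sym2 V₂ → Fin n) (β : Fin n) :
    (V₁ ⊕ {x : V₂ // x ≠ v₃}) → (V₁ ⊕ {x : V₂ // x ≠ v₃}) → Fin n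
  | Sum.inl x, Sum.inl y => c₁ s(x, y)
  | Sum.inr x, Sum.inr y => c₂ s(x.1, y.1)
  | Sum.inl x, Sum.inr y => if x = v₂ ∧ y.1 = v₄ then β else c₂ s(v₃, y.1)
  | Sum.inr y, Sum.inl x => if x = v₂ ∧ y.1 = v₄ then β else c₂ s(v₃, y.1)

theorem hjF_symm (c₁ : Sym2 V₁ → Fin n) (c₂ : Sym2 V₂ → Fin n) (β : Fin n) :
    ∀ a b, hjF v₂ v₃ v₄ c₁ c₂ β a b = hjF v₂ v₃ v₄ c₁ c₂ β b a := by
  intro a b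
  match a, b with
  | Sum.inl x, Sum.inl y => simp only [hjF, Sym2.eq_swap]
  | Sum.inr x, Sum.inr y => simp only [hjF, Sym2.eq_swap]
  | Sum.inl x, Sum.inr y => simp only [hjF]
  | Sum.inr y, Sum.inl x => simp only [hjF]

/-- the combined coloring on `Sym2` -/
def hjC (c₁ : Sym2 V₁ → Fin n) (c₂ : Sym2 V₂ → Fin n) (β : Fin n) :
    Sym2 (V₁ ⊕ {x : V₂ // x ≠ v₃}) → Fin n :=
  Sym2.lift ⟨hjF v₂ v₃ v₄ c₁ c₂ β, hjF_symm v₂ v₃ v₄ c₁ c₂ β⟩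

variable {v₂ v₃ v₄} {c₁ : Sym2 V₁ → Fin n} {c₂ : Sym2 V₂ → Fin n} {β : Fin n}

theorem hjC_inl (p : Sym2 V₁) :
    hjC v₂ v₃ v₄ c₁ c₂ β (Sym2.map Sum.inl p) = c₁ p := by
  induction p with
  | _ x y => rw [Sym2.map_pair_eq]; rfl

theorem hjC_emb (h12 : v₁ ≠ v₂) {q : Sym2 V₂} (hq : q ∈ G₂.edgeSet) :
    hjC v₂ v₃ v₄ c₁ c₂ β (Sym2.map (emb (V₁ := V₁) v₁ v₃) q) = c₂ q := by
  induction q with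
  | _ a b =>
    rw [SimpleGraph.mem_edgeSet] at hq
    rw [Sym2.map_pair_eq]
    by_cases ha : a = v₃ <;> by_cases hb : b = v₃
    · exact absurd (ha.trans hb.symm) hq.ne
    · rw [ha, emb_v₃, emb_ne _ _ hb]
      show (if v₁ = v₂ ∧ b = v₄ then β else c₂ s(v₃, b)) = c₂ s(v₃, b)
      rw [if_neg (fun hc => h12 hc.1)]
    · rw [hb, emb_v₃, emb_ne _ _ ha]
      show (if v₁ = v₂ ∧ a = v₄ then β else c₂ s(v₃, a)) = c₂ s(a, v₃)
      rw [if_neg (fun hc => h12 hc.1), Sym2.eq_swap]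
    · rw [emb_ne _ _ ha, emb_ne _ _ hb]
      rfl

theorem hjC_sp (h43 : v₄ ≠ v₃) :
    hjC v₂ v₃ v₄ c₁ c₂ β (sp (V₁ := V₁) v₂ h43) = β := by
  show (if v₂ = v₂ ∧ v₄ = v₄ then β else _) = β
  rw [if_pos ⟨rfl, rfl⟩]

end Color

section Combine

variable {G₁ G₂ v₁ v₂ v₃ v₄} {n : ℕ} [DecidableEq V₁]
variable (hadj₁ : G₁.Adj v₁ v₂) (hadj₂ : G₂.Adj v₃ v₄)

/-- relevant `G₁`-side edges -/
def Rel₁ {V₁ V₂ : Type*} [DecidableEq V₂] (G₁ : SimpleGraph V₁) (v₁ v₂ : V₁) (v₃ : V₂)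
    (H' : SimpleGraph (V₁ ⊕ {x : V₂ // x ≠ v₃})) (p : Sym2 V₁) : Prop :=
  p ∈ G₁.edgeSet ∧ p ≠ s(v₁, v₂) ∧ Sym2.map Sum.inl p ∈ H'.edgeSet

/-- relevant `G₂`-side edges -/
def Rel₂ {V₁ V₂ : Type*} [DecidableEq V₂] (G₂ : SimpleGraph V₂) (v₁ : V₁) (v₃ v₄ : V₂)
    (H' : SimpleGraph (V₁ ⊕ {x : V₂ // x ≠ v₃})) (q : Sym2 V₂) : Prop :=
  q ∈ G₂.edgeSet ∧ q ≠ s(v₃, v₄) ∧ Sym2.map (emb v₁ v₃) q ∈ H'.edgeSet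

/-- the main combination lemma -/
theorem pc_combine (h12 : v₁ ≠ v₂) (H' : SimpleGraph (V₁ ⊕ {x : V₂ // x ≠ v₃}))
    (hle : H' ≤ hajosJoin G₁ G₂ v₁ v₂ v₃ v₄)
    {c₁ : Sym2 V₁ → Fin n} {c₂ : Sym2 V₂ → Fin n} {β : Fin n}
    (hc1 : ∀ p q, Rel₁ G₁ v₁ v₂ v₃ H' p → Rel₁ G₁ v₁ v₂ v₃ H' q →
      p ≠ q → (∃ w, w ∈ p ∧ w ∈ q) → c₁ p ≠ c₁ q)
    (hc2 : ∀ p q, Rel₂ G₂ v₁ v₃ v₄ H' p → Rel₂ G₂ v₁ v₃ v₄ H' q →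
      p ≠ q → (∃ w, w ∈ p ∧ w ∈ q) → c₂ p ≠ c₂ q)
    (hc12 : ∀ p q, Rel₁ G₁ v₁ v₂ v₃ H' p → Rel₂ G₂ v₁ v₃ v₄ H' q →
      v₁ ∈ p → v₃ ∈ q → c₁ p ≠ c₂ q)
    (hb1 : ∀ p, Rel₁ G₁ v₁ v₂ v₃ H' p → v₂ ∈ p →
      sp v₂ hadj₂.ne' ∈ H'.edgeSet → c₁ p ≠ β)
    (hb2 : ∀ q, Rel₂ G₂ v₁ v₃ v₄ H' q → v₄ ∈ q →
      sp v₂ hadj₂.ne' ∈ H'.edgeSet → c₂ q ≠ β) :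
    PC H' n (hjC v₂ v₃ v₄ c₁ c₂ β) := by
  intro d₁ hd₁ d₂ hd₂ hne hsh
  obtain ⟨w, hw1, hw2⟩ := hsh
  have hd₁H := SimpleGraph.edgeSet_mono hle hd₁
  have hd₂H := SimpleGraph.edgeSet_mono hle hd₂
  rcases edge_cases hadj₂ hd₁H with ⟨p₁, hp₁, hp₁ne, rfl⟩ | ⟨q₁, hq₁, hq₁ne, rfl⟩ | rfl <;>
    rcases edge_cases hadj₂ hd₂H with ⟨p₂, hp₂, hp₂ne, rfl⟩ | ⟨q₂, hq₂, hq₂ne, rfl⟩ | rfl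
  · rw [hjC_inl, hjC_inl]
    refine hc1 p₁ p₂ ⟨hp₁, hp₁ne, hd₁⟩ ⟨hp₂, hp₂ne, hd₂⟩
      (fun hc => hne (by rw [hc])) (shared_inl_inl hw1 hw2)
  · rw [hjC_inl, hjC_emb G₂ v₁ h12 hq₂]
    obtain ⟨hv₁, hv₃⟩ := shared_inl_emb hw1 hw2
    exact hc12 p₁ q₂ ⟨hp₁, hp₁ne, hd₁⟩ ⟨hq₂, hq₂ne, hd₂⟩ hv₁ hv₃
  · rw [hjC_inl, hjC_sp]
    exact hb1 p₁ ⟨hp₁, hp₁ne, hd₁⟩ (shared_inl_sp hadj₂ hw1 hw2) hd₂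
  · rw [hjC_inl, hjC_emb G₂ v₁ h12 hq₁]
    obtain ⟨hv₁, hv₃⟩ := shared_inl_emb hw2 hw1
    exact (hc12 p₂ q₁ ⟨hp₂, hp₂ne, hd₂⟩ ⟨hq₁, hq₁ne, hd₁⟩ hv₁ hv₃).symm
  · rw [hjC_emb G₂ v₁ h12 hq₁, hjC_emb G₂ v₁ h12 hq₂]
    refine hc2 q₁ q₂ ⟨hq₁, hq₁ne, hd₁⟩ ⟨hq₂, hq₂ne, hd₂⟩
      (fun hc => hne (by rw [hc])) (shared_emb_emb hw1 hw2)
  · rw [hjC_emb G₂ v₁ h12 hq₁, hjC_sp]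
    exact hb2 q₁ ⟨hq₁, hq₁ne, hd₁⟩ (shared_emb_sp hadj₂ h12 hw1 hw2) hd₂
  · rw [hjC_inl, hjC_sp]
    exact (hb1 p₂ ⟨hp₂, hp₂ne, hd₂⟩ (shared_inl_sp hadj₂ hw2 hw1) hd₁).symm
  · rw [hjC_emb G₂ v₁ h12 hq₂, hjC_sp]
    exact (hb2 q₂ ⟨hq₂, hq₂ne, hd₂⟩ (shared_emb_sp hadj₂ h12 hw2 hw1) hd₁).symm
  · exact absurd rfl hne

end Combine

section Count

variable {G₁ G₂ v₁ v₂ v₃ v₄} {k : ℕ} [Finite V₁] [Finite V₂]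

theorem count_le (hadj₁ : G₁.Adj v₁ v₂) (hadj₂ : G₂.Adj v₃ v₄)
    (hdeg : deg (hajosJoin G₁ G₂ v₁ v₂ v₃ v₄) (Sum.inl v₁) ≤ k) :
    (G₁.incidenceSet v₁ \ {s(v₁, v₂)}).ncard +
      (G₂.incidenceSet v₃ \ {s(v₃, v₄)}).ncard ≤ k := by
  classical
  set I₁ : Set (Sym2 V₁) := G₁.incidenceSet v₁ \ {s(v₁, v₂)} with hI₁
  set I₂ : Set (Sym2 V₂) := G₂.incidenceSet v₃ \ {s(v₃, v₄)} with hI₂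
  set A : Set (Sym2 (V₁ ⊕ {x : V₂ // x ≠ v₃})) := Sym2.map Sum.inl '' I₁ with hA
  set B : Set (Sym2 (V₁ ⊕ {x : V₂ // x ≠ v₃})) := Sym2.map (emb v₁ v₃) '' I₂ with hB
  have hAsub : A ⊆ (hajosJoin G₁ G₂ v₁ v₂ v₃ v₄).incidenceSet (Sum.inl v₁) := by
    rintro _ ⟨p, ⟨hp, hpne⟩, rfl⟩
    refine ⟨mem_E1 hp.1 hpne, ?_⟩
    exact Sym2.mem_map.2 ⟨v₁, hp.2, rfl⟩
  have hBsub : B ⊆ (hajosJoin G₁ G₂ v₁ v₂ v₃ v₄).incidenceSet (Sum.inl v₁) := by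
    rintro _ ⟨q, ⟨hq, hqne⟩, rfl⟩
    refine ⟨mem_E2 hq.1 hqne, ?_⟩
    exact Sym2.mem_map.2 ⟨v₃, hq.2, emb_v₃ v₁ v₃⟩
  have hdisj : Disjoint A B := by
    rw [Set.disjoint_left]
    rintro _ ⟨p, ⟨hp, _⟩, rfl⟩ ⟨q, _, hq⟩
    exact map_inl_ne_map_emb hp.1 q hq.symm
  have hAcard : A.ncard = I₁.ncard :=
    Set.ncard_image_of_injective _ (Sym2.map.injective Sum.inl_injective)
  have hBcard : B.ncard = I₂.ncard :=
    Set.ncard_image_of_injective _ (Sym2.map.injective (emb_injective v₁ v₃))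
  have hunion : A.ncard + B.ncard = (A ∪ B).ncard :=
    (Set.ncard_union_eq hdisj (Set.toFinite A) (Set.toFinite B)).symm
  have hle : (A ∪ B).ncard ≤
      ((hajosJoin G₁ G₂ v₁ v₂ v₃ v₄).incidenceSet (Sum.inl v₁)).ncard :=
    Set.ncard_le_ncard (Set.union_subset hAsub hBsub) (Set.toFinite _)
  rw [ncard_incidenceSet] at hle
  omega

end Count

section NotColorable

variable {G₁ G₂ v₁ v₂ v₃ v₄} {k : ℕ} [DecidableEq V₁]

theorem not_colorable (hk0 : 0 < k) (hadj₁ : G₁.Adj v₁ v₂) (hadj₂ : G₂.Adj v₃ v₄)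
    (h1 : ¬ EdgeColorable G₁ k) (h2 : ¬ EdgeColorable G₂ k) :
    ¬ EdgeColorable (hajosJoin G₁ G₂ v₁ v₂ v₃ v₄) k := by
  intro hE
  obtain ⟨ρ, hρ⟩ := pc_of_edgeColorable hk0 hE
  set c₁ : Sym2 V₁ → Fin k := fun p => ρ (Sym2.map Sum.inl p) with hc₁def
  set c₂ : Sym2 V₂ → Fin k := fun q => ρ (Sym2.map (emb v₁ v₃) q) with hc₂def
  have hc₁ : PC (G₁.deleteEdges {s(v₁, v₂)}) k c₁ := by
    intro p hp q hq hne hsh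
    rw [SimpleGraph.edgeSet_deleteEdges] at hp hq
    obtain ⟨u, hu1, hu2⟩ := hsh
    exact hρ _ (mem_E1 hp.1 hp.2) _ (mem_E1 hq.1 hq.2)
      (fun hc => hne (Sym2.map.injective Sum.inl_injective hc))
      ⟨Sum.inl u, Sym2.mem_map.2 ⟨u, hu1, rfl⟩, Sym2.mem_map.2 ⟨u, hu2, rfl⟩⟩
  have hc₂ : PC (G₂.deleteEdges {s(v₃, v₄)}) k c₂ := by
    intro p hp q hq hne hsh
    rw [SimpleGraph.edgeSet_deleteEdges] at hp hq
    obtain ⟨u, hu1, hu2⟩ := hsh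
    exact hρ _ (mem_E2 hp.1 hp.2) _ (mem_E2 hq.1 hq.2)
      (fun hc => hne (Sym2.map.injective (emb_injective v₁ v₃) hc))
      ⟨emb v₁ v₃ u, Sym2.mem_map.2 ⟨u, hu1, rfl⟩, Sym2.mem_map.2 ⟨u, hu2, rfl⟩⟩
  set γ : Fin k := ρ (sp v₂ hadj₂.ne') with hγdef
  have hbv₄ : ∀ q ∈ G₂.edgeSet, q ≠ s(v₃, v₄) → v₄ ∈ q → c₂ q ≠ γ := by
    intro q hq hqne hv₄
    exact hρ _ (mem_E2 hq hqne) _ (mem_E3 hadj₂) (map_emb_ne_sp hadj₂ hadj₁.ne q)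
      ⟨Sum.inr ⟨v₄, hadj₂.ne'⟩, Sym2.mem_map.2 ⟨v₄, hv₄, emb_ne v₁ v₃ hadj₂.ne'⟩,
        by rw [sp]; simp⟩
  have hbv₂ : ∀ p ∈ G₁.edgeSet, p ≠ s(v₁, v₂) → v₂ ∈ p → c₁ p ≠ γ := by
    intro p hp hpne hv₂
    exact hρ _ (mem_E1 hp hpne) _ (mem_E3 hadj₂) (map_inl_ne_sp hadj₂ p)
      ⟨Sum.inl v₂, Sym2.mem_map.2 ⟨v₂, hv₂, rfl⟩, by rw [sp]; simp⟩
  obtain ⟨q', hq', hq'ne, hq'v₃, hq'c⟩ := no_common_free h2 hadj₂ hc₂ γ hbv₄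
  obtain ⟨p', hp', hp'ne, hp'v₁, hp'c⟩ := no_common_free h1 hadj₁ hc₁ γ hbv₂
  refine hρ _ (mem_E1 hp' hp'ne) _ (mem_E2 hq' hq'ne)
    (map_inl_ne_map_emb hp' q')
    ⟨Sum.inl v₁, Sym2.mem_map.2 ⟨v₁, hp'v₁, rfl⟩,
      Sym2.mem_map.2 ⟨v₃, hq'v₃, emb_v₃ v₁ v₃⟩⟩ ?_
  show c₁ p' = c₂ q'
  rw [hp'c, hq'c]

end NotColorable

section Construct

variable {G₁ G₂ v₁ v₂ v₃ v₄} {k : ℕ} [DecidableEq V₁] [Finite V₁] [Finite V₂]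

theorem mem_del {V : Type*} {G : SimpleGraph V} {p e : Sym2 V}
    (hp : p ∈ G.edgeSet) (hne : p ≠ e) : p ∈ (G.deleteEdges {e}).edgeSet := by
  rw [SimpleGraph.edgeSet_deleteEdges]
  exact ⟨hp, hne⟩

theorem colorable_del_sp (hk : 2 ≤ k) (hadj₁ : G₁.Adj v₁ v₂) (hadj₂ : G₂.Adj v₃ v₄)
    (hd₁ : EdgeColorable (G₁.deleteEdges {s(v₁, v₂)}) k)
    (hd₂ : EdgeColorable (G₂.deleteEdges {s(v₃, v₄)}) k)
    (hdeg : deg (hajosJoin G₁ G₂ v₁ v₂ v₃ v₄) (Sum.inl v₁) ≤ k) :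
    EdgeColorable ((hajosJoin G₁ G₂ v₁ v₂ v₃ v₄).deleteEdges {sp v₂ hadj₂.ne'}) k := by
  have hk0 : 0 < k := by omega
  obtain ⟨c₁, hc₁⟩ := pc_of_edgeColorable hk0 hd₁
  obtain ⟨c₂, hc₂⟩ := pc_of_edgeColorable hk0 hd₂
  set I₁ : Set (Sym2 V₁) := G₁.incidenceSet v₁ \ {s(v₁, v₂)} with hI₁
  set I₂ : Set (Sym2 V₂) := G₂.incidenceSet v₃ \ {s(v₃, v₄)} with hI₂
  have hcount : (c₂ '' I₂).ncard + (c₁ '' I₁).ncard ≤ k := by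
    have h1 := Set.ncard_image_le (s := I₁) (f := c₁) (Set.toFinite _)
    have h2 := Set.ncard_image_le (s := I₂) (f := c₂) (Set.toFinite _)
    have h3 := count_le hadj₁ hadj₂ hdeg
    rw [← hI₁, ← hI₂] at h3
    omega
  obtain ⟨π, hπ⟩ := exists_perm_avoid (c₂ '' I₂) (c₁ '' I₁) hcount
  refine edgeColorable_of_pc (hjC v₂ v₃ v₄ c₁ (fun q => π (c₂ q)) ⟨0, hk0⟩)
    (pc_combine hadj₂ hadj₁.ne _ (SimpleGraph.deleteEdges_le _) ?_ ?_ ?_ ?_ ?_)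
  · intro p q hp hq hne hsh
    exact hc₁ p (mem_del hp.1 hp.2.1) q (mem_del hq.1 hq.2.1) hne hsh
  · intro p q hp hq hne hsh hc
    exact hc₂ p (mem_del hp.1 hp.2.1) q (mem_del hq.1 hq.2.1) hne hsh (π.injective hc)
  · intro p q hp hq hv₁ hv₃ hc
    refine hπ (c₂ q) (Set.mem_image_of_mem c₂ ⟨⟨hq.1, hv₃⟩, hq.2.1⟩) ?_
    rw [← hc]
    exact Set.mem_image_of_mem c₁ ⟨⟨hp.1, hv₁⟩, hp.2.1⟩
  · intro p _ _ hsp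
    rw [SimpleGraph.edgeSet_deleteEdges] at hsp
    exact absurd rfl hsp.2
  · intro q _ _ hsp
    rw [SimpleGraph.edgeSet_deleteEdges] at hsp
    exact absurd rfl hsp.2

theorem colorable_del_inl (hk : 2 ≤ k) (hadj₁ : G₁.Adj v₁ v₂) (hadj₂ : G₂.Adj v₃ v₄)
    (hG₂ : ¬ EdgeColorable G₂ k)
    {p₀ : Sym2 V₁} (hp₀ : p₀ ∈ G₁.edgeSet) (hp₀ne : p₀ ≠ s(v₁, v₂))
    (hd₁ : EdgeColorable (G₁.deleteEdges {p₀}) k)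
    (hd₂ : EdgeColorable (G₂.deleteEdges {s(v₃, v₄)}) k)
    (hdeg : deg (hajosJoin G₁ G₂ v₁ v₂ v₃ v₄) (Sum.inl v₁) ≤ k)
    (hdeg₄ : deg G₂ v₄ ≤ k) :
    EdgeColorable ((hajosJoin G₁ G₂ v₁ v₂ v₃ v₄).deleteEdges {Sym2.map Sum.inl p₀}) k := by
  have hk0 : 0 < k := by omega
  obtain ⟨c₁, hc₁⟩ := pc_of_edgeColorable hk0 hd₁
  obtain ⟨c₂, hc₂⟩ := pc_of_edgeColorable hk0 hd₂
  set I₁ : Set (Sym2 V₁) := G₁.incidenceSet v₁ \ {s(v₁, v₂)} with hI₁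
  set I₂ : Set (Sym2 V₂) := G₂.incidenceSet v₃ \ {s(v₃, v₄)} with hI₂
  set I₄ : Set (Sym2 V₂) := G₂.incidenceSet v₄ \ {s(v₃, v₄)} with hI₄
  have hv₁₂mem : s(v₁, v₂) ∈ (G₁.deleteEdges {p₀}).edgeSet :=
    mem_del hadj₁ (fun hc => hp₀ne hc.symm)
  -- a color missing at v₄
  have hS₄lt : (c₂ '' I₄).ncard < k := by
    have h1 := Set.ncard_image_le (s := I₄) (f := c₂) (Set.toFinite _)
    have h2 : I₄.ncard = (G₂.incidenceSet v₄).ncard - 1 := by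
      rw [hI₄]
      exact Set.ncard_diff_singleton_of_mem ⟨hadj₂, Sym2.mem_mk_right v₃ v₄⟩
    have h3 : (G₂.incidenceSet v₄).ncard = deg G₂ v₄ := ncard_incidenceSet G₂ v₄
    have h4 : 0 < (G₂.incidenceSet v₄).ncard :=
      (Set.ncard_pos (Set.toFinite _)).2 ⟨s(v₃, v₄), ⟨hadj₂, Sym2.mem_mk_right v₃ v₄⟩⟩
    omega
  obtain ⟨δ, hδ⟩ := exists_not_mem_of_ncard_lt _ hS₄lt
  -- δ is used at v₃
  have hδS₃ : δ ∈ c₂ '' I₂ := by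
    have hb' : ∀ q ∈ G₂.edgeSet, q ≠ s(v₃, v₄) → v₄ ∈ q → c₂ q ≠ δ := by
      intro q hq hqne hv₄ hc
      exact hδ ⟨q, ⟨⟨hq, hv₄⟩, hqne⟩, hc⟩
    obtain ⟨q', hq', hq'ne, hq'v₃, hq'c⟩ := no_common_free hG₂ hadj₂ hc₂ δ hb'
    exact ⟨q', ⟨⟨hq', hq'v₃⟩, hq'ne⟩, hq'c⟩
  set α : Fin k := c₁ s(v₁, v₂) with hα
  have hαA₁ : α ∉ c₁ '' (I₁ \ {p₀}) := by
    rintro ⟨p, ⟨⟨⟨hp, hpv₁⟩, hpne⟩, hpp₀⟩, hpc⟩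
    exact hc₁ p (mem_del hp hpp₀) s(v₁, v₂) hv₁₂mem hpne
      ⟨v₁, hpv₁, Sym2.mem_mk_left v₁ v₂⟩ hpc
  have hcount : (c₂ '' I₂).ncard + (c₁ '' (I₁ \ {p₀})).ncard ≤ k := by
    have h1 := Set.ncard_image_le (s := I₁ \ {p₀}) (f := c₁) (Set.toFinite _)
    have h1' : (I₁ \ {p₀}).ncard ≤ I₁.ncard :=
      Set.ncard_le_ncard Set.diff_subset (Set.toFinite _)
    have h2 := Set.ncard_image_le (s := I₂) (f := c₂) (Set.toFinite _)
    have h3 := count_le hadj₁ hadj₂ hdeg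
    rw [← hI₁, ← hI₂] at h3
    omega
  obtain ⟨π, hπ, hπδ⟩ := exists_perm_avoid_pin _ _ hδS₃ hαA₁ hcount
  have hne₀ : ∀ p : Sym2 V₁, Sym2.map Sum.inl p ∈
      ((hajosJoin G₁ G₂ v₁ v₂ v₃ v₄).deleteEdges {Sym2.map Sum.inl p₀}).edgeSet →
      p ≠ p₀ := by
    intro p hmem hc
    rw [SimpleGraph.edgeSet_deleteEdges] at hmem
    exact hmem.2 (by rw [hc]; rfl)
  refine edgeColorable_of_pc (hjC v₂ v₃ v₄ c₁ (fun q => π (c₂ q)) α)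
    (pc_combine hadj₂ hadj₁.ne _ (SimpleGraph.deleteEdges_le _) ?_ ?_ ?_ ?_ ?_)
  · intro p q hp hq hne hsh
    exact hc₁ p (mem_del hp.1 (hne₀ p hp.2.2)) q (mem_del hq.1 (hne₀ q hq.2.2)) hne hsh
  · intro p q hp hq hne hsh hc
    exact hc₂ p (mem_del hp.1 hp.2.1) q (mem_del hq.1 hq.2.1) hne hsh (π.injective hc)
  · intro p q hp hq hv₁ hv₃ hc
    refine hπ (c₂ q) (Set.mem_image_of_mem c₂ ⟨⟨hq.1, hv₃⟩, hq.2.1⟩) ?_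
    rw [← hc]
    exact Set.mem_image_of_mem c₁ ⟨⟨⟨hp.1, hv₁⟩, hp.2.1⟩, hne₀ p hp.2.2⟩
  · intro p hp hv₂ _ hc
    exact hc₁ p (mem_del hp.1 (hne₀ p hp.2.2)) s(v₁, v₂) hv₁₂mem hp.2.1
      ⟨v₂, hv₂, Sym2.mem_mk_right v₁ v₂⟩ hc
  · intro q hq hv₄ _ hc
    rw [← hπδ] at hc
    exact hδ ((π.injective hc) ▸ Set.mem_image_of_mem c₂ ⟨⟨hq.1, hv₄⟩, hq.2.1⟩)

theorem colorable_del_emb (hk : 2 ≤ k) (hadj₁ : G₁.Adj v₁ v₂) (hadj₂ : G₂.Adj v₃ v₄)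
    (hG₁ : ¬ EdgeColorable G₁ k)
    {q₀ : Sym2 V₂} (hq₀ : q₀ ∈ G₂.edgeSet) (hq₀ne : q₀ ≠ s(v₃, v₄))
    (hd₁ : EdgeColorable (G₁.deleteEdges {s(v₁, v₂)}) k)
    (hd₂ : EdgeColorable (G₂.deleteEdges {q₀}) k)
    (hdeg : deg (hajosJoin G₁ G₂ v₁ v₂ v₃ v₄) (Sum.inl v₁) ≤ k)
    (hdeg₂ : deg G₁ v₂ ≤ k) :
    EdgeColorable ((hajosJoin G₁ G₂ v₁ v₂ v₃ v₄).deleteEdges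
      {Sym2.map (emb v₁ v₃) q₀}) k := by
  have hk0 : 0 < k := by omega
  obtain ⟨c₁, hc₁⟩ := pc_of_edgeColorable hk0 hd₁
  obtain ⟨c₂, hc₂⟩ := pc_of_edgeColorable hk0 hd₂
  set I₁ : Set (Sym2 V₁) := G₁.incidenceSet v₁ \ {s(v₁, v₂)} with hI₁
  set I₂ : Set (Sym2 V₂) := G₂.incidenceSet v₃ \ {s(v₃, v₄)} with hI₂
  set J₂ : Set (Sym2 V₁) := G₁.incidenceSet v₂ \ {s(v₁, v₂)} with hJ₂
  have hv₃₄mem : s(v₃, v₄) ∈ (G₂.deleteEdges {q₀}).edgeSet :=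
    mem_del hadj₂ (fun hc => hq₀ne hc.symm)
  -- a color missing at v₂
  have hS₂lt : (c₁ '' J₂).ncard < k := by
    have h1 := Set.ncard_image_le (s := J₂) (f := c₁) (Set.toFinite _)
    have h2 : J₂.ncard = (G₁.incidenceSet v₂).ncard - 1 := by
      rw [hJ₂]
      exact Set.ncard_diff_singleton_of_mem ⟨hadj₁, Sym2.mem_mk_right v₁ v₂⟩
    have h3 : (G₁.incidenceSet v₂).ncard = deg G₁ v₂ := ncard_incidenceSet G₁ v₂
    have h4 : 0 < (G₁.incidenceSet v₂).ncard :=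
      (Set.ncard_pos (Set.toFinite _)).2 ⟨s(v₁, v₂), ⟨hadj₁, Sym2.mem_mk_right v₁ v₂⟩⟩
    omega
  obtain ⟨δ, hδ⟩ := exists_not_mem_of_ncard_lt _ hS₂lt
  -- δ is used at v₁
  have hδS₁ : δ ∈ c₁ '' I₁ := by
    have hb' : ∀ p ∈ G₁.edgeSet, p ≠ s(v₁, v₂) → v₂ ∈ p → c₁ p ≠ δ := by
      intro p hp hpne hv₂ hc
      exact hδ ⟨p, ⟨⟨hp, hv₂⟩, hpne⟩, hc⟩
    obtain ⟨p', hp', hp'ne, hp'v₁, hp'c⟩ := no_common_free hG₁ hadj₁ hc₁ δ hb'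
    exact ⟨p', ⟨⟨hp', hp'v₁⟩, hp'ne⟩, hp'c⟩
  set α : Fin k := c₂ s(v₃, v₄) with hα
  have hαA₂ : α ∉ c₂ '' (I₂ \ {q₀}) := by
    rintro ⟨q, ⟨⟨⟨hq, hqv₃⟩, hqne⟩, hqq₀⟩, hqc⟩
    exact hc₂ q (mem_del hq hqq₀) s(v₃, v₄) hv₃₄mem hqne
      ⟨v₃, hqv₃, Sym2.mem_mk_left v₃ v₄⟩ hqc
  have hcount : (c₁ '' I₁).ncard + (c₂ '' (I₂ \ {q₀})).ncard ≤ k := by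
    have h1 := Set.ncard_image_le (s := I₁) (f := c₁) (Set.toFinite _)
    have h2 := Set.ncard_image_le (s := I₂ \ {q₀}) (f := c₂) (Set.toFinite _)
    have h2' : (I₂ \ {q₀}).ncard ≤ I₂.ncard :=
      Set.ncard_le_ncard Set.diff_subset (Set.toFinite _)
    have h3 := count_le hadj₁ hadj₂ hdeg
    rw [← hI₁, ← hI₂] at h3
    omega
  obtain ⟨π, hπ, hπδ⟩ := exists_perm_avoid_pin _ _ hδS₁ hαA₂ hcount
  have hne₀ : ∀ q : Sym2 V₂, Sym2.map (emb v₁ v₃) q ∈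
      ((hajosJoin G₁ G₂ v₁ v₂ v₃ v₄).deleteEdges {Sym2.map (emb v₁ v₃) q₀}).edgeSet →
      q ≠ q₀ := by
    intro q hmem hc
    rw [SimpleGraph.edgeSet_deleteEdges] at hmem
    exact hmem.2 (by rw [hc]; rfl)
  refine edgeColorable_of_pc (hjC v₂ v₃ v₄ (fun p => π (c₁ p)) c₂ α)
    (pc_combine hadj₂ hadj₁.ne _ (SimpleGraph.deleteEdges_le _) ?_ ?_ ?_ ?_ ?_)
  · intro p q hp hq hne hsh hc
    exact hc₁ p (mem_del hp.1 hp.2.1) q (mem_del hq.1 hq.2.1) hne hsh (π.injective hc)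
  · intro p q hp hq hne hsh
    exact hc₂ p (mem_del hp.1 (hne₀ p hp.2.2)) q (mem_del hq.1 (hne₀ q hq.2.2)) hne hsh
  · intro p q hp hq hv₁ hv₃ hc
    refine hπ (c₁ p) (Set.mem_image_of_mem c₁ ⟨⟨hp.1, hv₁⟩, hp.2.1⟩) ?_
    rw [hc]
    exact Set.mem_image_of_mem c₂ ⟨⟨⟨hq.1, hv₃⟩, hq.2.1⟩, hne₀ q hq.2.2⟩
  · intro p hp hv₂ _ hc
    rw [← hπδ] at hc
    exact hδ ((π.injective hc) ▸ Set.mem_image_of_mem c₁ ⟨⟨hp.1, hv₂⟩, hp.2.1⟩)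
  · intro q hq hv₄ _ hc
    exact hc₂ q (mem_del hq.1 (hne₀ q hq.2.2)) s(v₃, v₄) hv₃₄mem hq.2.1
      ⟨v₄, hv₄, Sym2.mem_mk_right v₃ v₄⟩ hc

end Construct

end HJ


/-- If `G₁` and `G₂` are `k`-critical graphs and `G` is a Hajós
join of `G₁` and `G₂` that has maximum degree `k`, then `G` is `k`-critical. -/
theorem stmt_2 {V₁ V₂ W : Type} [Fintype V₁] [Fintype V₂] [Fintype W]
    (k : ℕ) (hk : 2 ≤ k)
    (G₁ : SimpleGraph V₁) (G₂ : SimpleGraph V₂) (G : SimpleGraph W)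
    (h₁ : IsCritical k G₁) (h₂ : IsCritical k G₂)
    (hJ : IsHajosJoin G G₁ G₂)
    (hmax : (∀ v, deg G v ≤ k) ∧ ∃ v, deg G v = k) :
    IsCritical k G := by
  classical
  obtain ⟨v₁, v₂, v₃, v₄, hadj₁, hadj₂, ⟨f⟩⟩ := hJ
  have hG₁k : ¬ EdgeColorable G₁ k :=
    not_edgeColorable_of_chromIndex_eq h₁.2.2.1 (by omega)
  have hG₂k : ¬ EdgeColorable G₂ k :=
    not_edgeColorable_of_chromIndex_eq h₂.2.2.1 (by omega)
  have hd₁ : ∀ e ∈ G₁.edgeSet, EdgeColorable (G₁.deleteEdges {e}) k := by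
    intro e he
    have h := h₁.2.2.2 e he
    rw [← h]
    exact edgeColorable_chromIndex _
  have hd₂ : ∀ e ∈ G₂.edgeSet, EdgeColorable (G₂.deleteEdges {e}) k := by
    intro e he
    have h := h₂.2.2.2 e he
    rw [← h]
    exact edgeColorable_chromIndex _
  have hdeg : deg (hajosJoin G₁ G₂ v₁ v₂ v₃ v₄) (Sum.inl v₁) ≤ k := by
    have h := hmax.1 (f.symm (Sum.inl v₁))
    rwa [deg_map f (f.symm (Sum.inl v₁)), f.apply_symm_apply] at h
  have hHk : ¬ EdgeColorable (hajosJoin G₁ G₂ v₁ v₂ v₃ v₄) k :=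
    HJ.not_colorable (by omega) hadj₁ hadj₂ hG₁k hG₂k
  have hGk : ¬ EdgeColorable G k := fun hc => hHk (edgeColorable_of_iso f.symm hc)
  have hHdel : ∀ d ∈ (hajosJoin G₁ G₂ v₁ v₂ v₃ v₄).edgeSet,
      EdgeColorable ((hajosJoin G₁ G₂ v₁ v₂ v₃ v₄).deleteEdges {d}) k := by
    intro d hd
    rcases HJ.edge_cases hadj₂ hd with ⟨p, hp, hpne, rfl⟩ | ⟨q, hq, hqne, rfl⟩ | rfl
    · exact HJ.colorable_del_inl hk hadj₁ hadj₂ hG₂k hp hpne (hd₁ p hp)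
        (hd₂ _ hadj₂) hdeg (h₂.1 v₄)
    · exact HJ.colorable_del_emb hk hadj₁ hadj₂ hG₁k hq hqne (hd₁ _ hadj₁)
        (hd₂ q hq) hdeg (h₁.1 v₂)
    · exact HJ.colorable_del_sp hk hadj₁ hadj₂ (hd₁ _ hadj₁) (hd₂ _ hadj₂) hdeg
  have hGdel : ∀ e ∈ G.edgeSet, EdgeColorable (G.deleteEdges {e}) k := by
    intro e he
    exact edgeColorable_of_iso (isoDeleteEdges f e)
      (hHdel _ (f.toHom.map_mem_edgeSet he))
  refine ⟨hmax.1, hmax.2, ?_, ?_⟩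
  · have he₀ : Sym2.map ⇑f.symm (HJ.sp v₂ hadj₂.ne') ∈ G.edgeSet :=
      f.symm.toHom.map_mem_edgeSet (HJ.mem_E3 hadj₂)
    refine chromIndex_eq ?_ ?_ (by omega)
    · exact edgeColorable_succ_of_delete he₀ (hGdel _ he₀)
    · simpa using hGk
  · intro e he
    refine chromIndex_eq (hGdel e he) ?_ (by omega)
    intro hc
    have h := edgeColorable_succ_of_delete he hc
    rw [Nat.sub_add_cancel (by omega : 1 ≤ k)] at h
    exact hGk h
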